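/- Setup: let r ≥ 2 and s ≥ 1 be integers, let G be a finite simple graph on rs vertices with a distinguished vertex x, and let V_1, …, V_r be an almost equitable coloring of G − x with small class V_1, auxiliary digraph H, accessible classes A and non-accessible classes B, chosen so that no almost equitable coloring of G − x has more accessible classes. Let V_i be a terminal accessible class, let v ∈ V_i be an ordinary vertex, and let u ∈ Q'(v) lie in the class W_j ∈ B. Then the number of neighbors of v in W_j is not exactly 1 (equivalently, since u ∈ W_j is a neighbor of v, v has at least two neighbors in W_j). (This is Lemma 2.3(a) of the paper.) -/

import Mathlib

open scoped Classical

namespace Equitable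

variable {V : Type*}

/-- An equitable `r`-coloring of `G`: a proper coloring with `r` colors whose
color classes pairwise differ in size by at most `1`. -/
def IsEquitableColoring [Fintype V] (G : SimpleGraph V) (r : ℕ) (c : V → Fin r) : Prop :=
  (∀ u v : V, G.Adj u v → c u ≠ c v) ∧
  ∀ i j : Fin r,
    (Finset.univ.filter fun v => c v = i).card ≤
      (Finset.univ.filter fun v => c v = j).card + 1

/-- The number of edges of `G` with both endpoints in `S`. -/
noncomputable def edgesWithin [Fintype V] (G : SimpleGraph V) (S : Finset V) : ℕ :=
  (G.edgeFinset.filter fun e => ∀ v ∈ e, v ∈ S).card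

/-- The number of edges of `G` with one endpoint in `X` and the other in `Y`. -/
noncomputable def edgesBetween [Fintype V] (G : SimpleGraph V) (X Y : Finset V) : ℕ :=
  (G.edgeFinset.filter fun e => ∃ u ∈ X, ∃ w ∈ Y, e = s(u, w)).card

/-- The semi-planar edge bounds. -/
def SemiPlanarBounds [Fintype V] (G : SimpleGraph V) : Prop :=
  (∀ S : Finset V, edgesWithin G S ≤ 3 * S.card) ∧
  ∀ X Y : Finset V, Disjoint X Y → edgesBetween G X Y ≤ 2 * (X.card + Y.card)

/-- The planar edge bounds. -/
def PlanarBounds [Fintype V] (G : SimpleGraph V) : Prop :=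
  (∀ S : Finset V, 3 ≤ S.card → edgesWithin G S ≤ 3 * S.card - 6) ∧
  ∀ X Y : Finset V, Disjoint X Y → 3 ≤ X.card + Y.card →
    edgesBetween G X Y ≤ 2 * (X.card + Y.card) - 4

/-- The semi-planar bipartite edge bound. -/
def SemiPlanarBipBound [Fintype V] (G : SimpleGraph V) : Prop :=
  ∀ X Y : Finset V, Disjoint X Y → edgesBetween G X Y ≤ 2 * (X.card + Y.card)

/-- The planar bipartite edge bound. -/
def PlanarBipBound [Fintype V] (G : SimpleGraph V) : Prop :=
  ∀ X Y : Finset V, Disjoint X Y → 3 ≤ X.card + Y.card →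
    edgesBetween G X Y ≤ 2 * (X.card + Y.card) - 4

/-- `P` is an almost equitable coloring of `G − x`: a partition of `V(G) \ {x}` into `r`
independent sets, the small class `P 0` of size `s − 1` and the other classes of size `s`. -/
def AEColoring [Fintype V] (G : SimpleGraph V) (x : V) {r : ℕ} [NeZero r] (s : ℕ)
    (P : Fin r → Finset V) : Prop :=
  (∀ i j : Fin r, i ≠ j → Disjoint (P i) (P j)) ∧
  (∀ v : V, (∃ i, v ∈ P i) ↔ v ≠ x) ∧
  (∀ i : Fin r, ∀ u ∈ P i, ∀ w ∈ P i, ¬ G.Adj u w) ∧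
  (P 0).card = s - 1 ∧
  ∀ i : Fin r, i ≠ 0 → (P i).card = s

/-- The arc relation of the auxiliary digraph `H`: an arc from class `i` to class `j`
iff `i ≠ j` and some vertex of `P i` has no `G`-neighbor in `P j` (such a vertex
is a witness of the arc and is called movable to `P j`). -/
def Arc (G : SimpleGraph V) {r : ℕ} (P : Fin r → Finset V) (i j : Fin r) : Prop :=
  i ≠ j ∧ ∃ v ∈ P i, ∀ u ∈ P j, ¬ G.Adj v u

/-- A class is accessible if the auxiliary digraph has a directed path (possibly of
length `0`) from it to the small class `P 0`. -/
def Accessible (G : SimpleGraph V) {r : ℕ} [NeZero r] (P : Fin r → Finset V)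
    (i : Fin r) : Prop :=
  Relation.ReflTransGen (Arc G P) i 0

/-- The number of accessible classes. -/
noncomputable def accCount (G : SimpleGraph V) {r : ℕ} [NeZero r]
    (P : Fin r → Finset V) : ℕ :=
  (Finset.univ.filter fun i => Accessible G P i).card

/-- No almost equitable coloring of `G − x` has more accessible classes than `P`. -/
def MaxAccessible [Fintype V] (G : SimpleGraph V) (x : V) {r : ℕ} [NeZero r] (s : ℕ)
    (P : Fin r → Finset V) : Prop :=
  ∀ P' : Fin r → Finset V, AEColoring G x s P' → accCount G P' ≤ accCount G P

/-- Class `i` blocks class `j` if `i ≠ j` and the auxiliary digraph minus the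
class `i` has no directed path from `j` to the small class `P 0`. -/
def Blocks (G : SimpleGraph V) {r : ℕ} [NeZero r] (P : Fin r → Finset V)
    (i j : Fin r) : Prop :=
  i ≠ j ∧ ¬ Relation.ReflTransGen (fun p q => Arc G P p q ∧ p ≠ i ∧ q ≠ i) j 0

/-- An accessible class is terminal if it blocks no accessible class. -/
def Terminal (G : SimpleGraph V) {r : ℕ} [NeZero r] (P : Fin r → Finset V)
    (i : Fin r) : Prop :=
  Accessible G P i ∧ ∀ j : Fin r, Accessible G P j → ¬ Blocks G P i j

/-- `u` is a solo neighbor of `v` (where `v` lies in the accessible class `P i`):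
`u` lies in a non-accessible class, is adjacent to `v`, and `v` is the unique
neighbor of `u` in `P i`.  `Q(v)` is the set of such `u`. -/
def SoloNbr (G : SimpleGraph V) {r : ℕ} [NeZero r] (P : Fin r → Finset V)
    (i : Fin r) (v u : V) : Prop :=
  (∃ k : Fin r, ¬ Accessible G P k ∧ u ∈ P k) ∧ G.Adj v u ∧
    ∀ w ∈ P i, G.Adj u w → w = v

/-- `u ∈ Q'(v)`: `u` is a solo neighbor of `v` that is non-adjacent to some other
solo neighbor of `v`. -/
def InQ' (G : SimpleGraph V) {r : ℕ} [NeZero r] (P : Fin r → Finset V)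
    (i : Fin r) (v u : V) : Prop :=
  SoloNbr G P i v u ∧ ∃ u' : V, SoloNbr G P i v u' ∧ u' ≠ u ∧ ¬ G.Adj u u'

/-- A vertex `v` of a terminal accessible class `P i` is ordinary if some other vertex of
`P i` is movable to another accessible class, or there are at most two accessible classes. -/
def Ordinary (G : SimpleGraph V) {r : ℕ} [NeZero r] (P : Fin r → Finset V)
    (i : Fin r) (v : V) : Prop :=
  (∃ v' ∈ P i, v' ≠ v ∧
    ∃ j : Fin r, j ≠ i ∧ Accessible G P j ∧ ∀ w ∈ P j, ¬ G.Adj v' w) ∨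
  accCount G P ≤ 2

/-- The strong component of the auxiliary digraph containing class `i`. -/
noncomputable def strongComp (G : SimpleGraph V) {r : ℕ} (P : Fin r → Finset V)
    (i : Fin r) : Finset (Fin r) :=
  Finset.univ.filter fun j =>
    Relation.ReflTransGen (Arc G P) i j ∧ Relation.ReflTransGen (Arc G P) j i


section Aux

variable [Fintype V] {G : SimpleGraph V} {r : ℕ} [NeZero r]

lemma arc_congr {P P' : Fin r → Finset V} {p q : Fin r}
    (hp : P' p = P p) (hq : P' q = P q) (h : Arc G P p q) : Arc G P' p q := by
  obtain ⟨h1, w, hw, hmov⟩ := h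
  exact ⟨h1, w, by rw [hp]; exact hw, fun z hz => hmov z (by rwa [hq] at hz)⟩

lemma restricted_transfer {P P' : Fin r → Finset V} {i j : Fin r}
    (hPP' : ∀ p : Fin r, p ≠ i → p ≠ j → P' p = P p)
    (hj : ¬ Accessible G P j) {m : Fin r}
    (h : Relation.ReflTransGen (fun p q => Arc G P p q ∧ p ≠ i ∧ q ≠ i) m 0) :
    Relation.ReflTransGen (Arc G P') m 0 := by
  induction h using Relation.ReflTransGen.head_induction_on with
  | refl => exact Relation.ReflTransGen.refl
  | head hpq hq ih =>
    rename_i p q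
    have hpacc : Accessible G P p :=
      Relation.ReflTransGen.mono (fun a b (hh : Arc G P a b ∧ a ≠ i ∧ b ≠ i) => hh.1) _ _
        (Relation.ReflTransGen.head (r := fun p q => Arc G P p q ∧ p ≠ i ∧ q ≠ i) hpq hq)
    have hqacc : Accessible G P q :=
      Relation.ReflTransGen.mono (fun a b (hh : Arc G P a b ∧ a ≠ i ∧ b ≠ i) => hh.1) _ _ hq
    have hpj : p ≠ j := fun h' => hj (h' ▸ hpacc)
    have hqj : q ≠ j := fun h' => hj (h' ▸ hqacc)
    exact Relation.ReflTransGen.head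
      (arc_congr (hPP' p hpq.2.1 hpj) (hPP' q hpq.2.2 hqj) hpq.1) ih

lemma mem_map_swap {S : Finset V} {u v : V} (hv : v ∈ S) (hu : u ∉ S) {a : V} :
    a ∈ S.map (Equiv.swap u v).toEmbedding ↔ a = u ∨ (a ∈ S ∧ a ≠ v) := by
  rw [Finset.mem_map_equiv, Equiv.symm_swap]
  have huv : u ≠ v := fun h => hu (h ▸ hv)
  by_cases hau : a = u
  · subst hau; simp [Equiv.swap_apply_left, hv]
  · by_cases hav : a = v
    · subst hav; simp [Equiv.swap_apply_right, hu, hau, huv]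
    · rw [Equiv.swap_apply_of_ne_of_ne hau hav]
      simp [hau, hav]

lemma map_swap_eq {S : Finset V} {u v : V} (hu : u ∉ S) (hv : v ∉ S) :
    S.map (Equiv.swap u v).toEmbedding = S := by
  ext a
  rw [Finset.mem_map_equiv, Equiv.symm_swap]
  by_cases hau : a = u
  · subst hau; rw [Equiv.swap_apply_left]; simp [hu, hv]
  · by_cases hav : a = v
    · subst hav; rw [Equiv.swap_apply_right]; simp [hu, hv]
    · rw [Equiv.swap_apply_of_ne_of_ne hau hav]

/-- Swapping a solo vertex `u` with its unique neighbor `v` in class `i` yields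
another almost equitable coloring. -/
lemma swap_AE {x : V} {s : ℕ} {P : Fin r → Finset V} (hP : AEColoring G x s P)
    {i j : Fin r} (hij : i ≠ j) {u v : V} (hv : v ∈ P i) (hu : u ∈ P j)
    (hsolo : ∀ w ∈ P i, G.Adj u w → w = v)
    (hvj : ∀ w ∈ P j, G.Adj v w → w = u) :
    AEColoring G x s (fun m => (P m).map (Equiv.swap u v).toEmbedding) := by
  obtain ⟨hdisj, hcov, hind, hc0, hcs⟩ := hP
  have hxn : ∀ m, x ∉ P m := fun m hm => ((hcov x).1 ⟨m, hm⟩) rfl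
  have hxu : x ≠ u := fun h => hxn j (h ▸ hu)
  have hxv : x ≠ v := fun h => hxn i (h ▸ hv)
  have huPi : u ∉ P i := Finset.disjoint_left.1 (hdisj j i hij.symm) hu
  have hvPj : v ∉ P j := Finset.disjoint_left.1 (hdisj i j hij) hv
  refine ⟨?_, ?_, ?_, ?_, ?_⟩
  · intro m n hmn
    exact (Finset.disjoint_map _).2 (hdisj m n hmn)
  · intro w
    have hfix : Equiv.swap u v x = x := Equiv.swap_apply_of_ne_of_ne hxu hxv
    dsimp only
    simp only [Finset.mem_map_equiv, Equiv.symm_swap]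
    rw [hcov]
    constructor
    · intro h hwx; exact h (by rw [hwx, hfix])
    · intro h hswx
      apply h
      have h2 := congrArg (Equiv.swap u v) hswx
      rwa [Equiv.swap_apply_self, hfix] at h2
  · intro m a ha b hb
    dsimp only at ha hb
    by_cases hmi : m = i
    · subst hmi
      rw [mem_map_swap hv huPi] at ha hb
      rcases ha with rfl | ⟨haP, hav⟩
      · rcases hb with rfl | ⟨hbP, hbv⟩
        · exact G.irrefl
        · exact fun h => hbv (hsolo b hbP h)
      · rcases hb with rfl | ⟨hbP, hbv⟩
        · exact fun h => hav (hsolo a haP h.symm)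
        · exact hind m a haP b hbP
    · by_cases hmj : m = j
      · subst hmj
        rw [Equiv.swap_comm] at ha hb
        rw [mem_map_swap hu hvPj] at ha hb
        rcases ha with rfl | ⟨haP, hau⟩
        · rcases hb with rfl | ⟨hbP, hbu⟩
          · exact G.irrefl
          · exact fun h => hbu (hvj b hbP h)
        · rcases hb with rfl | ⟨hbP, hbu⟩
          · exact fun h => hau (hvj a haP h.symm)
          · exact hind m a haP b hbP
      · have h1 : u ∉ P m := Finset.disjoint_left.1 (hdisj j m (Ne.symm hmj)) hu
        have h2 : v ∉ P m := Finset.disjoint_left.1 (hdisj i m (Ne.symm hmi)) hv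
        rw [map_swap_eq h1 h2] at ha hb
        exact hind m a ha b hb
  · dsimp only; rw [Finset.card_map]; exact hc0
  · intro m hm; dsimp only; rw [Finset.card_map]; exact hcs m hm

/-- Moving a vertex `v` (with no neighbor in the small class) into the small class and
its solo neighbor `u` into `v`'s old class yields another almost equitable coloring,
after relabeling classes `0` and `j`. -/
lemma moveQ_AE {x : V} {s : ℕ} (hs : 1 ≤ s) {P : Fin r → Finset V}
    (hP : AEColoring G x s P)
    {i j : Fin r} (hi0 : i ≠ 0) (hj0 : j ≠ 0) (hij : i ≠ j)
    {u v : V} (hv : v ∈ P i) (hu : u ∈ P j)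
    (hsolo : ∀ w ∈ P i, G.Adj u w → w = v)
    (hv0 : ∀ z ∈ P 0, ¬ G.Adj v z) :
    AEColoring G x s (fun m =>
      if m = 0 then (P j).erase u
      else if m = j then insert v (P 0)
      else if m = i then insert u ((P i).erase v)
      else P m) := by
  obtain ⟨hdisj, hcov, hind, hc0, hcs⟩ := hP
  have hxn : ∀ m, x ∉ P m := fun m hm => ((hcov x).1 ⟨m, hm⟩) rfl
  have huPi : u ∉ P i := Finset.disjoint_left.1 (hdisj j i hij.symm) hu
  have hvPj : v ∉ P j := Finset.disjoint_left.1 (hdisj i j hij) hv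
  have hvP0 : v ∉ P 0 := Finset.disjoint_left.1 (hdisj i 0 hi0) hv
  have huP0 : u ∉ P 0 := Finset.disjoint_left.1 (hdisj j 0 hj0) hu
  have huv : u ≠ v := fun h => huPi (h ▸ hv)
  set Q : Fin r → Finset V := fun m =>
      if m = 0 then (P j).erase u
      else if m = j then insert v (P 0)
      else if m = i then insert u ((P i).erase v)
      else P m with hQdef
  have hQ0 : Q 0 = (P j).erase u := by simp [hQdef]
  have hQj : Q j = insert v (P 0) := by simp [hQdef, hj0]
  have hQi : Q i = insert u ((P i).erase v) := by simp [hQdef, hi0, hij]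
  have hQm : ∀ m : Fin r, m ≠ 0 → m ≠ j → m ≠ i → Q m = P m := by
    intro m h1 h2 h3; simp [hQdef, h1, h2, h3]
  -- classification of members of `Q m`
  have hcl : ∀ (m : Fin r) (a : V), a ∈ Q m →
      (a = u ∧ m = i) ∨ (a = v ∧ m = j) ∨
      (a ∈ P (Equiv.swap (0 : Fin r) j m) ∧ a ≠ u ∧ a ≠ v) := by
    intro m a ha
    by_cases hm0 : m = 0
    · subst hm0
      rw [hQ0, Finset.mem_erase] at ha
      refine Or.inr (Or.inr ⟨?_, ha.1, fun h => hvPj (h ▸ ha.2)⟩)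
      rw [Equiv.swap_apply_left]; exact ha.2
    · by_cases hmj : m = j
      · subst hmj
        rw [hQj, Finset.mem_insert] at ha
        rcases ha with rfl | ha
        · exact Or.inr (Or.inl ⟨rfl, rfl⟩)
        · refine Or.inr (Or.inr ⟨?_, fun h => huP0 (h ▸ ha), fun h => hvP0 (h ▸ ha)⟩)
          rw [Equiv.swap_apply_right]; exact ha
      · by_cases hmi : m = i
        · subst hmi
          rw [hQi, Finset.mem_insert] at ha
          rcases ha with rfl | ha
          · exact Or.inl ⟨rfl, rfl⟩
          · rw [Finset.mem_erase] at ha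
            refine Or.inr (Or.inr ⟨?_, fun h => huPi (h ▸ ha.2), ha.1⟩)
            rw [Equiv.swap_apply_of_ne_of_ne hi0 hij]; exact ha.2
        · rw [hQm m hm0 hmj hmi] at ha
          have hum : u ∉ P m := Finset.disjoint_left.1 (hdisj j m (Ne.symm hmj)) hu
          have hvm : v ∉ P m := Finset.disjoint_left.1 (hdisj i m (Ne.symm hmi)) hv
          refine Or.inr (Or.inr ⟨?_, fun h => hum (h ▸ ha), fun h => hvm (h ▸ ha)⟩)
          rwa [Equiv.swap_apply_of_ne_of_ne hm0 hmj]
  refine ⟨?_, ?_, ?_, ?_, ?_⟩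
  · intro m n hmn
    rw [Finset.disjoint_left]
    intro a ham han
    rcases hcl m a ham with ⟨hau, hmi⟩ | ⟨hav, hmj⟩ | ⟨haP, hau, hav⟩ <;>
      rcases hcl n a han with ⟨hbu, hni⟩ | ⟨hbv, hnj⟩ | ⟨hbP, hbu', hbv'⟩
    · exact hmn (hmi.trans hni.symm)
    · exact huv (hau.symm.trans hbv)
    · exact hbu' hau
    · exact huv (hbu.symm.trans hav)
    · exact hmn (hmj.trans hnj.symm)
    · exact hbv' hav
    · exact hau hbu
    · exact hav hbv
    · exact Finset.disjoint_left.1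
        (hdisj _ _ fun h => hmn ((Equiv.swap (0 : Fin r) j).injective h)) haP hbP
  · intro w
    constructor
    · rintro ⟨m, hm⟩
      rcases hcl m w hm with ⟨hwu, _⟩ | ⟨hwv, _⟩ | ⟨hw, _, _⟩
      · rw [hwu]; exact (hcov u).1 ⟨j, hu⟩
      · rw [hwv]; exact (hcov v).1 ⟨i, hv⟩
      · exact (hcov w).1 ⟨_, hw⟩
    · intro hwx
      obtain ⟨m, hm⟩ := (hcov w).2 hwx
      by_cases hwu : w = u
      · exact ⟨i, by rw [hQi, hwu]; exact Finset.mem_insert_self _ _⟩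
      · by_cases hwv : w = v
        · exact ⟨j, by rw [hQj, hwv]; exact Finset.mem_insert_self _ _⟩
        · by_cases hm0 : m = 0
          · subst hm0
            exact ⟨j, by rw [hQj]; exact Finset.mem_insert_of_mem hm⟩
          · by_cases hmj : m = j
            · subst hmj
              exact ⟨0, by rw [hQ0]; exact Finset.mem_erase.2 ⟨hwu, hm⟩⟩
            · by_cases hmi : m = i
              · subst hmi
                exact ⟨m, by
                  rw [hQi]
                  exact Finset.mem_insert_of_mem (Finset.mem_erase.2 ⟨hwv, hm⟩)⟩
              · exact ⟨m, by rw [hQm m hm0 hmj hmi]; exact hm⟩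
  · intro m a ha b hb
    by_cases hm0 : m = 0
    · subst hm0
      rw [hQ0, Finset.mem_erase] at ha hb
      exact hind j a ha.2 b hb.2
    · by_cases hmj : m = j
      · subst hmj
        rw [hQj, Finset.mem_insert] at ha hb
        rcases ha with rfl | ha
        · rcases hb with rfl | hb
          · exact G.irrefl
          · exact hv0 b hb
        · rcases hb with rfl | hb
          · exact fun h => hv0 a ha h.symm
          · exact hind 0 a ha b hb
      · by_cases hmi : m = i
        · subst hmi
          rw [hQi, Finset.mem_insert] at ha hb
          rcases ha with rfl | ha
          · rcases hb with rfl | hb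
            · exact G.irrefl
            · rw [Finset.mem_erase] at hb
              exact fun h => hb.1 (hsolo b hb.2 h)
          · rcases hb with rfl | hb
            · rw [Finset.mem_erase] at ha
              exact fun h => ha.1 (hsolo a ha.2 h.symm)
            · rw [Finset.mem_erase] at ha hb
              exact hind _ a ha.2 b hb.2
        · rw [hQm m hm0 hmj hmi] at ha hb
          exact hind m a ha b hb
  · show (Q 0).card = s - 1
    rw [hQ0, Finset.card_erase_of_mem hu, hcs j hj0]
  · intro m hm0
    show (Q m).card = s
    by_cases hmj : m = j
    · subst hmj
      rw [hQj, Finset.card_insert_of_notMem hvP0, hc0]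
      omega
    · by_cases hmi : m = i
      · subst hmi
        rw [hQi, Finset.card_insert_of_notMem
          (fun h => huPi (Finset.mem_of_mem_erase h)),
          Finset.card_erase_of_mem hv, hcs m hm0]
        omega
      · rw [hQm m hm0 hmj hmi]; exact hcs m hm0

end Aux

/-- **Lemma 2.3(a).** Let `P` be an almost equitable coloring of `G − x` maximizing the
number of accessible classes, let `v` be an ordinary vertex of a terminal accessible
class `P i`, and let `u ∈ Q'(v)` lie in the non-accessible class `P j`.  Then `v` does
not have exactly one neighbor in `P j`. -/
theorem solo_class_not_single_neighbor (V : Type*) [Fintype V] (G : SimpleGraph V)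
    (x : V) (r s : ℕ) [NeZero r] (hr : 2 ≤ r) (hs : 1 ≤ s)
    (hcard : Fintype.card V = r * s)
    (P : Fin r → Finset V) (hP : AEColoring G x s P)
    (hmax : MaxAccessible G x s P)
    (i : Fin r) (hterm : Terminal G P i)
    (v : V) (hv : v ∈ P i) (hord : Ordinary G P i v)
    (u : V) (j : Fin r) (hu : u ∈ P j) (hjB : ¬ Accessible G P j)
    (huQ' : InQ' G P i v u) :
    ((P j).filter fun w => G.Adj v w).card ≠ 1 := by
  intro h1
  obtain ⟨hsoloU, u', hsoloU', hu'u, hnadj⟩ := huQ'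
  obtain ⟨⟨k, hkB, hu'k⟩, hvu', hsolo'⟩ := hsoloU'
  obtain ⟨_, hvu, hsolo⟩ := hsoloU
  have hPc := hP
  obtain ⟨hdisj, hcov, hind, hc0, hcs⟩ := hPc
  have hAccI : Accessible G P i := hterm.1
  have hij : i ≠ j := fun h => hjB (h ▸ hAccI)
  have hj0 : j ≠ 0 := fun h => hjB (by rw [h]; exact Relation.ReflTransGen.refl)
  have hki : k ≠ i := fun h => hkB (h ▸ hAccI)
  have hk0 : k ≠ 0 := fun h => hkB (by rw [h]; exact Relation.ReflTransGen.refl)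
  have huPi : u ∉ P i := Finset.disjoint_left.1 (hdisj j i hij.symm) hu
  -- the unique neighbor of `v` in `P j` is `u`
  have hfil : (P j).filter (fun w => G.Adj v w) = {u} := by
    obtain ⟨a, haeq⟩ := Finset.card_eq_one.1 h1
    have hum : u ∈ (P j).filter (fun w => G.Adj v w) := Finset.mem_filter.2 ⟨hu, hvu⟩
    rw [haeq] at hum
    rw [haeq, Finset.mem_singleton.1 hum]
  have hvj : ∀ w ∈ P j, G.Adj v w → w = u := by
    intro w hw hadj
    have hmem : w ∈ (P j).filter (fun w => G.Adj v w) := Finset.mem_filter.2 ⟨hw, hadj⟩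
    rw [hfil] at hmem
    exact Finset.mem_singleton.1 hmem
  have hkj : k ≠ j := by
    intro h; subst h; exact hu'u (hvj u' hu'k hvu')
  -- the swapped coloring
  set P' : Fin r → Finset V := fun m => (P m).map (Equiv.swap u v).toEmbedding with hP'def
  have hAEP' : AEColoring G x s P' := swap_AE hP hij hv hu hsolo hvj
  have hPP' : ∀ m : Fin r, m ≠ i → m ≠ j → P' m = P m := by
    intro m hmi hmj
    exact map_swap_eq (Finset.disjoint_left.1 (hdisj j m (Ne.symm hmj)) hu)
      (Finset.disjoint_left.1 (hdisj i m (Ne.symm hmi)) hv)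
  have hmemP'i : ∀ a : V, a ∈ P' i ↔ a = u ∨ (a ∈ P i ∧ a ≠ v) :=
    fun a => mem_map_swap hv huPi
  -- accessible classes other than `i` stay accessible
  have hAcc' : ∀ m : Fin r, Accessible G P m → m ≠ i → Accessible G P' m := by
    intro m hm hmi
    have hnb := hterm.2 m hm
    rw [Blocks] at hnb
    push_neg at hnb
    exact restricted_transfer hPP' hjB (hnb (Ne.symm hmi))
  -- the arc from `k` to `i` in the new auxiliary digraph
  have hArcKI : Arc G P' k i := by
    refine ⟨hki, u', ?_, ?_⟩
    · rw [hPP' k hki hkj]; exact hu'k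
    · intro z hz
      rw [hmemP'i] at hz
      rcases hz with rfl | ⟨hzPi, hzv⟩
      · exact fun h => hnadj h.symm
      · exact fun h => hzv (hsolo' z hzPi h)
  -- counting tools
  have hboundP : ∀ S : Finset (Fin r), (∀ m ∈ S, Accessible G P m) →
      S.card ≤ accCount G P := by
    intro S hS
    unfold accCount
    exact Finset.card_le_card
      (fun m hm => Finset.mem_filter.2 ⟨Finset.mem_univ m, hS m hm⟩)
  have hbound : ∀ P2 : Fin r → Finset V, AEColoring G x s P2 →
      ∀ S : Finset (Fin r), (∀ m ∈ S, Accessible G P2 m) → S.card ≤ accCount G P := by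
    intro P2 hP2 S hS
    calc S.card ≤ accCount G P2 := by
          unfold accCount
          exact Finset.card_le_card
            (fun m hm => Finset.mem_filter.2 ⟨Finset.mem_univ m, hS m hm⟩)
      _ ≤ accCount G P := hmax P2 hP2
  rcases hord with ⟨v', hv'Pi, hv'v, m, hmi, hmAcc, hmov⟩ | ha2
  · -- case 1: some other vertex of `P i` is movable to accessible `P m`
    have hmj : m ≠ j := fun h => hjB (h ▸ hmAcc)
    have hAccP'i : Accessible G P' i := by
      refine Relation.ReflTransGen.head (⟨fun h => hmi h.symm, v', ?_, ?_⟩ : Arc G P' i m)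
        (hAcc' m hmAcc hmi)
      · exact (hmemP'i v').2 (Or.inr ⟨hv'Pi, hv'v⟩)
      · rw [hPP' m hmi hmj]; exact hmov
    have hkA : k ∉ Finset.univ.filter (fun m => Accessible G P m) := by
      simp only [Finset.mem_filter, Finset.mem_univ, true_and]
      exact hkB
    have hsub : ∀ m' ∈ insert k (Finset.univ.filter (fun m => Accessible G P m)),
        Accessible G P' m' := by
      intro m' hm'
      rcases Finset.mem_insert.1 hm' with rfl | hm'
      · exact Relation.ReflTransGen.head hArcKI hAccP'i
      · have hm'acc : Accessible G P m' := (Finset.mem_filter.1 hm').2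
        by_cases hm'i : m' = i
        · exact hm'i ▸ hAccP'i
        · exact hAcc' m' hm'acc hm'i
    have hcard1 := hbound P' hAEP' _ hsub
    rw [Finset.card_insert_of_notMem hkA] at hcard1
    have : accCount G P = (Finset.univ.filter (fun m => Accessible G P m)).card := by
      unfold accCount; rfl
    omega
  · -- case 2: at most two accessible classes
    by_cases hi0 : i = 0
    · subst hi0
      -- every accessible class is the small class
      have hA1 : ∀ m : Fin r, Accessible G P m → m = 0 := by
        intro m hm
        by_contra hm0
        have hnb := hterm.2 m hm
        rw [Blocks] at hnb
        push_neg at hnb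
        have hpath := hnb (Ne.symm hm0)
        rcases Relation.ReflTransGen.cases_tail hpath with heq | ⟨q, _, hq0⟩
        · exact hm0 heq.symm
        · exact hq0.2.2 rfl
      have hle1 : accCount G P ≤ 1 := by
        unfold accCount
        calc (Finset.univ.filter (fun m => Accessible G P m)).card
            ≤ ({0} : Finset (Fin r)).card := Finset.card_le_card
              (fun m hm => Finset.mem_singleton.2 (hA1 m (Finset.mem_filter.1 hm).2))
          _ = 1 := Finset.card_singleton _
      have hcard2 := hbound P' hAEP' {0, k} (by
        intro m hm
        rcases Finset.mem_insert.1 hm with rfl | hm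
        · exact Relation.ReflTransGen.refl
        · rw [Finset.mem_singleton.1 hm]
          exact Relation.ReflTransGen.single hArcKI)
      have h2 : ({0, k} : Finset (Fin r)).card = 2 := by
        rw [Finset.card_insert_of_notMem (by simpa using Ne.symm hk0),
          Finset.card_singleton]
      omega
    · -- every accessible class is `0` or `i`
      have hA2 : ∀ m : Fin r, Accessible G P m → m = 0 ∨ m = i := by
        intro m hm
        by_contra hmm
        push_neg at hmm
        have hc3 := hboundP {0, i, m} (by
          intro z hz
          rcases Finset.mem_insert.1 hz with rfl | hz
          · exact Relation.ReflTransGen.refl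
          · rcases Finset.mem_insert.1 hz with rfl | hz
            · exact hAccI
            · rw [Finset.mem_singleton.1 hz]; exact hm)
        have hcard3 : ({0, i, m} : Finset (Fin r)).card = 3 := by
          rw [Finset.card_insert_of_notMem (by
              simp only [Finset.mem_insert, Finset.mem_singleton]
              push_neg
              exact ⟨Ne.symm hi0, Ne.symm hmm.1⟩),
            Finset.card_insert_of_notMem (by simpa using Ne.symm hmm.2),
            Finset.card_singleton]
        omega
      -- the first step of a path from `i` to `0` goes directly to `0`
      rcases Relation.ReflTransGen.cases_head hAccI with heq | ⟨q, hiq, hq0⟩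
      · exact hi0 heq
      · have hq : q = 0 := by
          rcases hA2 q hq0 with h | h
          · exact h
          · exact absurd h (Ne.symm hiq.1)
        subst hq
        obtain ⟨_, w, hwPi, hwmov⟩ := hiq
        by_cases hex : ∃ w' ∈ P i, w' ≠ v ∧ ∀ z ∈ P 0, ¬ G.Adj w' z
        · -- a witness different from `v`: use the swapped coloring
          obtain ⟨w', hw'Pi, hw'v, hw'mov⟩ := hex
          have hArcI0 : Arc G P' i 0 := by
            refine ⟨hi0, w', (hmemP'i w').2 (Or.inr ⟨hw'Pi, hw'v⟩), ?_⟩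
            rw [hPP' 0 (Ne.symm hi0) (Ne.symm hj0)]
            exact hw'mov
          have hcard2 := hbound P' hAEP' {0, i, k} (by
            intro z hz
            rcases Finset.mem_insert.1 hz with rfl | hz
            · exact Relation.ReflTransGen.refl
            · rcases Finset.mem_insert.1 hz with rfl | hz
              · exact Relation.ReflTransGen.single hArcI0
              · rw [Finset.mem_singleton.1 hz]
                exact Relation.ReflTransGen.head hArcKI
                  (Relation.ReflTransGen.single hArcI0))
          have hcard3 : ({0, i, k} : Finset (Fin r)).card = 3 := by
            rw [Finset.card_insert_of_notMem (by
                simp only [Finset.mem_insert, Finset.mem_singleton]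
                push_neg
                exact ⟨Ne.symm hi0, Ne.symm hk0⟩),
              Finset.card_insert_of_notMem (by simpa using Ne.symm hki),
              Finset.card_singleton]
          omega
        · -- the only witness is `v`: move `v` into the small class instead
          have hwv : w = v := by
            by_contra h
            exact hex ⟨w, hwPi, h, hwmov⟩
          have hv0 : ∀ z ∈ P 0, ¬ G.Adj v z := hwv ▸ hwmov
          have hAEQ := moveQ_AE hs hP hi0 hj0 hij hv hu hsolo hv0
          set Q : Fin r → Finset V := fun m =>
              if m = 0 then (P j).erase u
              else if m = j then insert v (P 0)
              else if m = i then insert u ((P i).erase v)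
              else P m with hQdef
          have hQ0 : Q 0 = (P j).erase u := by simp [hQdef]
          have hQi : Q i = insert u ((P i).erase v) := by simp [hQdef, hi0, hij]
          have hQk : Q k = P k := by simp [hQdef, hk0, hkj, hki]
          have hArcQI0 : Arc G Q i 0 := by
            refine ⟨hi0, u, by rw [hQi]; exact Finset.mem_insert_self _ _, ?_⟩
            intro z hz
            rw [hQ0, Finset.mem_erase] at hz
            exact hind j u hu z hz.2
          have hArcQKI : Arc G Q k i := by
            refine ⟨hki, u', by rw [hQk]; exact hu'k, ?_⟩
            intro z hz
            rw [hQi, Finset.mem_insert] at hz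
            rcases hz with rfl | hz
            · exact fun h => hnadj h.symm
            · rw [Finset.mem_erase] at hz
              exact fun h => hz.1 (hsolo' z hz.2 h)
          have hcard2 := hbound Q hAEQ {0, i, k} (by
            intro z hz
            rcases Finset.mem_insert.1 hz with rfl | hz
            · exact Relation.ReflTransGen.refl
            · rcases Finset.mem_insert.1 hz with rfl | hz
              · exact Relation.ReflTransGen.single hArcQI0
              · rw [Finset.mem_singleton.1 hz]
                exact Relation.ReflTransGen.head hArcQKI
                  (Relation.ReflTransGen.single hArcQI0))
          have hcard3 : ({0, i, k} : Finset (Fin r)).card = 3 := by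
            rw [Finset.card_insert_of_notMem (by
                simp only [Finset.mem_insert, Finset.mem_singleton]
                push_neg
                exact ⟨Ne.symm hi0, Ne.symm hk0⟩),
              Finset.card_insert_of_notMem (by simpa using Ne.symm hki),
              Finset.card_singleton]
          omega

end Equitable
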